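/- For every t > 0 the constant vector t·(1,1,1,1) lies in Ω, and α₁(t·(1,1,1,1)) = 3·arccos( cosh(2t) / (1 + 2·cosh(2t)) ) − π. The function t ↦ α₁(t·(1,1,1,1)) is strictly decreasing on (0,∞), its limit as t → 0⁺ equals 3·arccos(1/3) − π (the solid angle of a regular Euclidean tetrahedron of side length 2), and its limit as t → ∞ equals 0. -/

import Mathlib

open Real Finset Filter

/-- `y i = coth r i`. -/
noncomputable def yc (r : Fin 4 → ℝ) (i : Fin 4) : ℝ := Real.cosh (r i) / Real.sinh (r i)

/-- The quantity `Q(r)` whose positivity characterizes non-degenerate hyperbolic tetrahedra. -/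
noncomputable def Qh (r : Fin 4 → ℝ) : ℝ :=
  (∑ i, yc r i) ^ 2 - 2 * ∑ i, (yc r i) ^ 2 + 4

/-- The set of real ball packings of a tetrahedron. -/
noncomputable def OmegaSet : Set (Fin 4 → ℝ) := {r | (∀ i, 0 < r i) ∧ 0 < Qh r}

/-- The `i`-th virtual tetrahedron space `Dᵢ`. -/
noncomputable def Dset (i : Fin 4) : Set (Fin 4 → ℝ) :=
  {r | (∀ m, 0 < r m) ∧
    (∑ j ∈ Finset.univ.erase i, yc r j)
      + 2 * Real.sqrt (((∑ j ∈ Finset.univ.erase i, yc r j) ^ 2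
          - ∑ j ∈ Finset.univ.erase i, (yc r j) ^ 2) / 2 + 1) ≤ yc r i}

/-- The dihedral angle `β i j` of the hyperbolic tetrahedron determined by `r`. -/
noncomputable def betaAngle (r : Fin 4 → ℝ) (i j : Fin 4) : ℝ :=
  Real.arccos
    ((Real.sinh (r i) * Real.sinh (r j)
        * Real.sqrt (∏ m ∈ (Finset.univ.erase i).erase j, Real.sinh (r m)))
      / (4 * Real.sqrt (∏ m ∈ (Finset.univ.erase i).erase j, Real.sinh (r i + r j + r m)))
      * (Qh r - (yc r i + yc r j) ^ 2
          + ((∑ m ∈ (Finset.univ.erase i).erase j, yc r m) ^ 2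
              - 4 * ∏ m ∈ (Finset.univ.erase i).erase j, yc r m)))

/-- The solid angle `αᵢ` of the hyperbolic tetrahedron determined by `r`. -/
noncomputable def solidAngle (r : Fin 4 → ℝ) (i : Fin 4) : ℝ :=
  (∑ j ∈ Finset.univ.erase i, betaAngle r i j) - Real.pi

open Classical in
/-- The extended solid angle `α̃ᵢ`. -/
noncomputable def tildeAlpha (r : Fin 4 → ℝ) (i : Fin 4) : ℝ :=
  if r ∈ OmegaSet then solidAngle r i
  else if r ∈ Dset i then 2 * Real.pi else 0

/-- Given a ball packing `r` on the vertex set `Fin N`, a vertex `i` and a tetrahedron `s`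
containing `i`, the associated local packing in `(0,∞)⁴`, with the radius of `i` first. -/
noncomputable def localPacking {N : ℕ} (r : Fin N → ℝ) (i : Fin N) (s : Finset (Fin N)) :
    Fin 4 → ℝ :=
  fun m => if m = 0 then r i
    else r (((s.erase i).sort (· ≤ ·)).getD (m.val - 1) i)

/-- The extended combinatorial scalar curvature `K̃ᵢ(r)`. -/
noncomputable def Ktilde {N : ℕ} (T3 : Multiset (Finset (Fin N))) (r : Fin N → ℝ)
    (i : Fin N) : ℝ :=
  4 * Real.pi -
    ((T3.filter (fun s => i ∈ s)).map (fun s => tildeAlpha (localPacking r i s) 0)).sum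

/-- The tetra-degree of the vertex `i`. -/
def tetraDegree {N : ℕ} (T3 : Multiset (Finset (Fin N))) (i : Fin N) : ℕ :=
  (T3.filter (fun s => i ∈ s)).card

/-- `R` is a solution of the extended combinatorial Yamabe flow on the time domain `S`. -/
def IsExtYamabeFlowSolution {N : ℕ} (T3 : Multiset (Finset (Fin N)))
    (R : ℝ → Fin N → ℝ) (S : Set ℝ) : Prop :=
  (∀ t ∈ S, ∀ i, 0 < R t i) ∧
  ∀ t ∈ S, ∀ i, HasDerivWithinAt (fun u => R u i)
      (-(Ktilde T3 (R t) i) * Real.sinh (R t i)) S t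


section Aux

private lemma sinh_three' (t : ℝ) :
    Real.sinh (t+t+t) = Real.sinh t * (1 + 2*Real.cosh (2*t)) := by
  have h : t+t+t = 2*t + t := by ring
  rw [h, Real.sinh_add, Real.sinh_two_mul, Real.cosh_two_mul]
  linear_combination Real.sinh t * Real.cosh_sq t

private lemma beta_const' {t : ℝ} (ht : 0 < t) {j : Fin 4} (hj : j ≠ 0) :
    betaAngle (fun _ => t) 0 j =
      Real.arccos (Real.cosh (2*t) / (1 + 2*Real.cosh (2*t))) := by
  have hs : 0 < Real.sinh t := Real.sinh_pos_iff.2 ht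
  have hC : (1:ℝ) ≤ Real.cosh (2*t) := Real.one_le_cosh _
  have hD : (0:ℝ) < 1 + 2*Real.cosh (2*t) := by linarith
  have hcard : (((Finset.univ : Finset (Fin 4)).erase 0).erase j).card = 2 := by
    fin_cases j <;> simp_all
  unfold betaAngle Qh yc
  simp only [Finset.prod_const, Finset.sum_const, hcard, Fin.sum_univ_four, nsmul_eq_mul,
    Finset.card_univ, Fintype.card_fin, Nat.cast_ofNat]
  rw [sinh_three' t]
  rw [Real.sqrt_sq hs.le, Real.sqrt_sq (by positivity)]
  congr 1
  have hc2 := Real.cosh_two_mul t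
  field_simp
  rw [hc2]
  ring

private lemma key' {t : ℝ} (ht : 0 < t) :
    solidAngle (fun _ => t) 0 =
      3 * Real.arccos (Real.cosh (2 * t) / (1 + 2 * Real.cosh (2 * t))) - Real.pi := by
  unfold solidAngle
  have he : ((Finset.univ : Finset (Fin 4)).erase 0) = {1,2,3} := by decide
  rw [he, Finset.sum_insert (by decide), Finset.sum_insert (by decide), Finset.sum_singleton,
    beta_const' ht (by decide), beta_const' ht (by decide), beta_const' ht (by decide)]
  ring

private lemma fmem (t : ℝ) :
    Real.cosh (2*t) / (1 + 2*Real.cosh (2*t)) ∈ Set.Icc (-1:ℝ) 1 := by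
  have hC : (1:ℝ) ≤ Real.cosh (2*t) := Real.one_le_cosh _
  have hD : (0:ℝ) < 1 + 2*Real.cosh (2*t) := by linarith
  constructor
  · have : (0:ℝ) ≤ Real.cosh (2*t) / (1 + 2*Real.cosh (2*t)) :=
      div_nonneg (by linarith) hD.le
    linarith
  · rw [div_le_one hD]; linarith

end Aux

theorem stmt3 :
    (∀ t : ℝ, 0 < t → ((fun _ => t) : Fin 4 → ℝ) ∈ OmegaSet ∧
      solidAngle (fun _ => t) 0 =
        3 * Real.arccos (Real.cosh (2 * t) / (1 + 2 * Real.cosh (2 * t))) - Real.pi) ∧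
    StrictAntiOn (fun t : ℝ => solidAngle (fun _ => t) 0) (Set.Ioi 0) ∧
    Filter.Tendsto (fun t : ℝ => solidAngle (fun _ => t) 0) (nhdsWithin 0 (Set.Ioi 0))
      (nhds (3 * Real.arccos (1 / 3) - Real.pi)) ∧
    Filter.Tendsto (fun t : ℝ => solidAngle (fun _ => t) 0) Filter.atTop (nhds 0) := by
  refine ⟨?_, ?_, ?_, ?_⟩
  · intro t ht
    refine ⟨⟨fun i => ht, ?_⟩, key' ht⟩
    have hQ : Qh (fun _ => t) = 8*(Real.cosh t/Real.sinh t)^2 + 4 := by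
      simp only [Qh, yc, Fin.sum_univ_four]; ring
    rw [hQ]; positivity
  · intro a ha b hb hab
    simp only [Set.mem_Ioi] at ha hb
    simp only [key' ha, key' hb]
    have hlt : Real.cosh (2*a) < Real.cosh (2*b) := by
      rw [Real.cosh_lt_cosh]
      rw [abs_of_pos (by linarith), abs_of_pos (by linarith)]
      linarith
    have hCa : (1:ℝ) ≤ Real.cosh (2*a) := Real.one_le_cosh _
    have hCb : (1:ℝ) ≤ Real.cosh (2*b) := Real.one_le_cosh _
    have hflt : Real.cosh (2*a) / (1 + 2*Real.cosh (2*a))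
        < Real.cosh (2*b) / (1 + 2*Real.cosh (2*b)) := by
      rw [div_lt_div_iff₀ (by linarith) (by linarith)]
      nlinarith
    have := Real.strictAntiOn_arccos (fmem a) (fmem b) hflt
    linarith
  · have hc : ContinuousAt (fun t : ℝ =>
        3 * Real.arccos (Real.cosh (2*t) / (1 + 2*Real.cosh (2*t))) - Real.pi) 0 := by
      have hdiv : ContinuousAt (fun t : ℝ =>
          Real.cosh (2*t) / (1 + 2*Real.cosh (2*t))) 0 := by
        apply ContinuousAt.div
        · fun_prop
        · fun_prop
        · norm_num
      exact ((continuousAt_const.mul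
        (Real.continuous_arccos.continuousAt.comp hdiv)).sub continuousAt_const)
    have h0 : (fun t : ℝ =>
        3 * Real.arccos (Real.cosh (2*t) / (1 + 2*Real.cosh (2*t))) - Real.pi) 0
        = 3 * Real.arccos (1/3) - Real.pi := by
      norm_num
    have h1 := hc.tendsto
    rw [show (2:ℝ)*0 = 0 by ring, Real.cosh_zero] at h1
    norm_num at h1
    refine Filter.Tendsto.congr' ?_ (h1.mono_left nhdsWithin_le_nhds)
    filter_upwards [self_mem_nhdsWithin] with t ht
    exact (key' ht).symm
  · have hmono : ∀ t : ℝ, t ≤ 1 + 2*Real.cosh (2*t) := by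
      intro t
      have h1 := Real.add_one_le_exp (2*t)
      have h2 := Real.cosh_eq (2*t)
      have h3 := (Real.exp_pos (-(2*t))).le
      have h4 := Real.one_le_cosh (2*t)
      rcases le_total t 0 with h | h
      · linarith
      · nlinarith
    have htop : Filter.Tendsto (fun t : ℝ => 1 + 2*Real.cosh (2*t)) Filter.atTop
        Filter.atTop := tendsto_atTop_mono hmono tendsto_id
    have hinv : Filter.Tendsto (fun t : ℝ => (1 + 2*Real.cosh (2*t))⁻¹) Filter.atTop
        (nhds 0) := htop.inv_tendsto_atTop
    have hlim : Filter.Tendsto (fun t : ℝ => Real.cosh (2*t) / (1 + 2*Real.cosh (2*t)))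
        Filter.atTop (nhds (1/2)) := by
      have h2 : Filter.Tendsto (fun t : ℝ => 1/2 - (1/2) * (1 + 2*Real.cosh (2*t))⁻¹)
          Filter.atTop (nhds (1/2 - (1/2) * 0)) :=
        tendsto_const_nhds.sub (hinv.const_mul (1/2))
      rw [show (1:ℝ)/2 - (1/2)*0 = 1/2 by ring] at h2
      refine h2.congr fun t => ?_
      have hC : (1:ℝ) ≤ Real.cosh (2*t) := Real.one_le_cosh _
      have hD : (0:ℝ) < 1 + 2*Real.cosh (2*t) := by linarith
      field_simp
      ring
    have harc : Real.arccos (1/2) = Real.pi/3 := by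
      rw [← Real.cos_pi_div_three]
      exact Real.arccos_cos (by positivity) (by linarith [Real.pi_pos])
    have h3 : Filter.Tendsto (fun t : ℝ =>
        3 * Real.arccos (Real.cosh (2*t) / (1 + 2*Real.cosh (2*t))) - Real.pi)
        Filter.atTop (nhds 0) := by
      have := ((Real.continuous_arccos.tendsto (1/2)).comp hlim).const_mul (3:ℝ)
      have h4 := this.sub_const Real.pi
      rw [harc, show (3:ℝ) * (Real.pi/3) - Real.pi = 0 by ring] at h4
      exact h4
    refine Filter.Tendsto.congr' ?_ h3
    filter_upwards [Filter.eventually_gt_atTop 0] with t ht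
    exact (key' ht).symm
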